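/- Let p be a prime and m a natural number. For every natural number k, the element (p)_q^k · (k)_{q^p}! · (⌊pk/p^m⌋)_{q^{p^m}}! / ((⌊k/p^m⌋)_{q^{p^{m+1}}}! · (pk)_q!) of ℚ(q) lies in the subring ℤ[q]_{(p,q−1)}. -/
import Mathlib


noncomputable section

open Polynomial

/-- `ℤ[q]`, the polynomial ring in one variable `q` over `ℤ`. -/
abbrev Zq : Type := Polynomial ℤ

/-- `ℚ(q)`, realized as the fraction field of `ℤ[q]`. -/
abbrev Qq : Type := FractionRing Zq

/-- The canonical embedding `ℤ[q] → ℚ(q)`. -/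
def ι : Zq →+* Qq := algebraMap Zq Qq

/-- The image of the variable `q` in `ℚ(q)`. -/
def qQ : Qq := ι X

/-- The `q^a`-integer `(n)_{q^a} = 1 + q^a + ⋯ + q^{a(n-1)}` in `ℤ[q]`. -/
def qInt (a n : ℕ) : Zq := ∑ j ∈ Finset.range n, X ^ (a * j)

/-- The `q^a`-factorial `(n)_{q^a}! = ∏_{i=1}^{n} (i)_{q^a}` in `ℤ[q]`. -/
def qFact (a n : ℕ) : Zq := ∏ i ∈ Finset.range n, qInt a (i + 1)

/-- The prime ideal `(p, q - 1)` of `ℤ[q]`. -/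
def pqIdeal (p : ℕ) : Ideal Zq := Ideal.span {C (p : ℤ), X - 1}

/-- Membership in the localization `ℤ[q]_{(p,q-1)}`, viewed inside `ℚ(q)`:
`x = a / b` with `b ∉ (p, q-1)`. -/
def InLoc (p : ℕ) (x : Qq) : Prop :=
  ∃ a b : Zq, b ∉ pqIdeal p ∧ x * ι b = ι a

/-- Being a unit of the localization `ℤ[q]_{(p,q-1)}`, viewed inside `ℚ(q)`:
`x = a / b` with `a, b ∉ (p, q-1)`. -/
def IsLocUnit (p : ℕ) (x : Qq) : Prop :=
  ∃ a b : Zq, a ∉ pqIdeal p ∧ b ∉ pqIdeal p ∧ x * ι b = ι a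

/-- The Gaussian `q`-binomial coefficient `(k choose k')_q` as an element of `ℚ(q)`. -/
def qBinomF (k k' : ℕ) : Qq :=
  ι (qFact 1 k) / (ι (qFact 1 k') * ι (qFact 1 (k - k')))

/-- The level-`m` coefficient `{k choose k'}_{(m),q}` as an element of `ℚ(q)`. -/
def braceC (p m k k' : ℕ) : Qq :=
  ι (qFact (p ^ m) (k / p ^ m)) /
    (ι (qFact (p ^ m) (k' / p ^ m)) * ι (qFact (p ^ m) ((k - k') / p ^ m)))

/-- The level-`m` coefficient `⟨k choose k'⟩_{(m),q}` as an element of `ℚ(q)`. -/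
def angleC (p m k k' : ℕ) : Qq := qBinomF k k' * (braceC p m k k')⁻¹

def myphi (p : ℕ) : Zq →+* ZMod p :=
  (Int.castRingHom (ZMod p)).comp (Polynomial.evalRingHom 1)

lemma myphi_mem {p : ℕ} {x : Zq} (hx : x ∈ pqIdeal p) : myphi p x = 0 := by
  have h : pqIdeal p ≤ RingHom.ker (myphi p) := by
    rw [pqIdeal, Ideal.span_le]
    rintro y hy
    simp only [Set.mem_insert_iff, Set.mem_singleton_iff] at hy
    rcases hy with rfl | rfl <;>
      simp [RingHom.mem_ker, myphi, ZMod.intCast_cast]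
  simpa [RingHom.mem_ker] using h hx

lemma myphi_qInt (p a n : ℕ) : myphi p (qInt a n) = (n : ZMod p) := by
  simp [myphi, qInt, eval_finset_sum]

lemma qInt_ne_zero (a : ℕ) {n : ℕ} (hn : 0 < n) : qInt a n ≠ 0 := by
  intro h
  have : Polynomial.eval 1 (qInt a n) = (n : ℤ) := by simp [qInt, eval_finset_sum]
  rw [h] at this
  simp at this
  omega

lemma qFact_ne_zero (a n : ℕ) : qFact a n ≠ 0 := by
  rw [qFact]
  exact Finset.prod_ne_zero_iff.mpr fun i _ => qInt_ne_zero a (Nat.succ_pos i)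

lemma qInt_mul_key (b n : ℕ) : qInt b n * (X ^ b - 1) = X ^ (b * n) - 1 := by
  have : qInt b n = ∑ j ∈ Finset.range n, (X ^ b) ^ j := by
    simp [qInt, pow_mul]
  rw [this, geom_sum_mul, ← pow_mul]

lemma qInt_mul (a p j : ℕ) (ha : 0 < a) :
    qInt a (p * j) = qInt a p * qInt (a * p) j := by
  have hX : (X : Zq) ^ a - 1 ≠ 0 := by
    intro h
    have : Polynomial.eval 0 ((X : Zq) ^ a - 1) = -1 := by
      simp [zero_pow ha.ne']
    rw [h] at this; simp at this
  apply mul_right_cancel₀ hX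
  rw [qInt_mul_key, ← mul_assoc a p j, ← qInt_mul_key (a * p) j, ← qInt_mul_key a p]
  ring

def Rprod (p a n : ℕ) : Zq :=
  ∏ i ∈ Finset.range n, if p ∣ (i + 1) then 1 else qInt a (i + 1)

lemma qFact_succ (a n : ℕ) : qFact a (n + 1) = qFact a n * qInt a (n + 1) := by
  simp [qFact, Finset.prod_range_succ]

lemma Rprod_succ (p a n : ℕ) :
    Rprod p a (n + 1) = Rprod p a n * (if p ∣ (n + 1) then 1 else qInt a (n + 1)) := by
  simp [Rprod, Finset.prod_range_succ]

lemma qFact_split (p a : ℕ) (hp : 0 < p) (ha : 0 < a) (n : ℕ) :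
    qFact a n = qInt a p ^ (n / p) * qFact (a * p) (n / p) * Rprod p a n := by
  induction n with
  | zero => simp [qFact, Rprod]
  | succ n ih =>
    rw [qFact_succ, ih, Rprod_succ]
    by_cases h : p ∣ (n + 1)
    · rw [if_pos h]
      have h1 : (n + 1) / p = n / p + 1 := by rw [Nat.succ_div, if_pos h]
      have h2 : n + 1 = p * ((n + 1) / p) := (Nat.mul_div_cancel' h).symm
      have h3 : qInt a (n + 1) = qInt a p * qInt (a * p) (n / p + 1) := by
        conv_lhs => rw [h2, h1, qInt_mul a p _ ha]
      rw [h1, h3, qFact_succ]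
      ring
    · rw [if_neg h]
      have h1 : (n + 1) / p = n / p := by simp [Nat.succ_div, h]
      rw [h1]; ring

lemma Rprod_ne_mem {p : ℕ} (hp : p.Prime) (a n : ℕ) : Rprod p a n ∉ pqIdeal p := by
  haveI : Fact p.Prime := ⟨hp⟩
  intro hmem
  have h0 := myphi_mem hmem
  have hval : myphi p (Rprod p a n) =
      ∏ i ∈ Finset.range n, if p ∣ (i + 1) then 1 else ((i + 1 : ℕ) : ZMod p) := by
    rw [Rprod, map_prod]
    refine Finset.prod_congr rfl fun i _ => ?_
    split <;> simp [myphi_qInt]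
  rw [hval] at h0
  have : ∀ i ∈ Finset.range n,
      (if p ∣ (i + 1) then 1 else ((i + 1 : ℕ) : ZMod p)) ≠ 0 := by
    intro i _
    split
    · exact one_ne_zero
    · rename_i hnd
      exact fun hc => hnd ((ZMod.natCast_eq_zero_iff _ _).mp hc)
  exact Finset.prod_ne_zero_iff.mpr this h0

lemma Rprod_ne_zero {p : ℕ} (hp : p.Prime) (a n : ℕ) : Rprod p a n ≠ 0 := by
  intro h
  exact Rprod_ne_mem hp a n (h ▸ (pqIdeal p).zero_mem)

lemma ι_ne_zero {x : Zq} (hx : x ≠ 0) : ι x ≠ 0 := by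
  simpa [ι] using fun h => hx ((IsFractionRing.injective Zq Qq) (by simpa using h))

set_option synthInstance.maxHeartbeats 1000000 in
/-- `(p)_q^k ⬝ (k)_{q^p}! ⬝ (⌊pk/p^m⌋)_{q^{p^m}}! / ((⌊k/p^m⌋)_{q^{p^{m+1}}}! ⬝ (pk)_q!)`
lies in `ℤ[q]_{(p,q-1)}`. -/
theorem stmt7 (p : ℕ) (hp : p.Prime) (m k : ℕ) :
    InLoc p (ι (qInt 1 p) ^ k * ι (qFact p k) * ι (qFact (p ^ m) (p * k / p ^ m)) *
      (ι (qFact (p ^ (m + 1)) (k / p ^ m)) * ι (qFact 1 (p * k)))⁻¹) := by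
  have hp0 : 0 < p := hp.pos
  set N := p * k / p ^ m with hN
  have hNp : N / p = k / p ^ m := by
    rw [hN, Nat.div_div_eq_div_mul, mul_comm (p ^ m) p, ← Nat.div_div_eq_div_mul,
      Nat.mul_div_cancel_left k hp0]
  have h1 : qFact 1 (p * k) = qInt 1 p ^ k * qFact p k * Rprod p 1 (p * k) := by
    have := qFact_split p 1 hp0 one_pos (p * k)
    simpa [Nat.mul_div_cancel_left k hp0] using this
  have h2 : qFact (p ^ m) N =
      qInt (p ^ m) p ^ (k / p ^ m) * qFact (p ^ (m + 1)) (k / p ^ m) * Rprod p (p ^ m) N := by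
    have := qFact_split p (p ^ m) hp0 (pow_pos hp0 m) N
    rwa [hNp, ← pow_succ] at this
  refine ⟨qInt (p ^ m) p ^ (k / p ^ m) * Rprod p (p ^ m) N, Rprod p 1 (p * k),
    Rprod_ne_mem hp 1 (p * k), ?_⟩
  have hA : ι (qInt 1 p) ≠ 0 := ι_ne_zero (qInt_ne_zero 1 hp0)
  have hF : ι (qFact p k) ≠ 0 := ι_ne_zero (qFact_ne_zero p k)
  have hG : ι (qFact (p ^ (m + 1)) (k / p ^ m)) ≠ 0 := ι_ne_zero (qFact_ne_zero _ _)
  have hR : ι (Rprod p 1 (p * k)) ≠ 0 := ι_ne_zero (Rprod_ne_zero hp 1 (p * k))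
  have hE : ι (qFact 1 (p * k)) ≠ 0 := ι_ne_zero (qFact_ne_zero 1 (p * k))
  rw [h1, h2]
  simp only [map_mul, map_pow]
  have hQ : ι (qFact (p ^ (m + 1)) (k / p ^ m)) *
      (ι (qInt 1 p) ^ k * ι (qFact p k) * ι (Rprod p 1 (p * k))) ≠ 0 :=
    mul_ne_zero hG (mul_ne_zero (mul_ne_zero (pow_ne_zero k hA) hF) hR)
  rw [mul_right_comm, ← div_eq_mul_inv, div_eq_iff hQ]
  ring
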